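/- Block-structure lemma for a unitary intertwining product states: Let d ≥ 1 and k₁, k₂ ≥ 1, let {e_j}_{j=1}^{d} and {f_j}_{j=1}^{d} be orthonormal bases of ℂ^d, let ξ be a positive-definite density matrix on ℂ^{k₁}, let τ_j be density matrices on ℂ^{k₂}, and let V : ℂ^d ⊗ ℂ^{k₁} → ℂ^d ⊗ ℂ^{k₂} be unitary (so in particular k₁ = k₂). If V (|e_j⟩⟨e_j| ⊗ ξ) V† = |f_j⟩⟨f_j| ⊗ τ_j for every j = 1, …, d, then there exist unitaries W_j : ℂ^{k₁} → ℂ^{k₂} such that V = Σ_{j=1}^{d} |f_j⟩⟨e_j| ⊗ W_j (and then τ_j = W_j ξ W_j†). -/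

import Mathlib

/-!
Block-structure lemma for a unitary intertwining product states: if a unitary
`V : ℂ^d ⊗ ℂ^{k₁} → ℂ^d ⊗ ℂ^{k₂}` maps `|e_j⟩⟨e_j| ⊗ ξ` to `|f_j⟩⟨f_j| ⊗ τ_j` for
orthonormal bases `{e_j}`, `{f_j}` and a full-rank state `ξ`, then
`V = Σ_j |f_j⟩⟨e_j| ⊗ W_j` for some unitaries `W_j`, and `τ_j = W_j ξ W_j†`.
-/

open Matrix Finset
open scoped Matrix Kronecker ComplexOrder

noncomputable section

/-- If `B * ξ * Bᴴ = 0` with `ξ` positive definite, then `B = 0`. -/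
lemma aux_zero_of_posdef {k₁ k₂ : ℕ} (ξ : Matrix (Fin k₁) (Fin k₁) ℂ) (hξ : ξ.PosDef)
    (B : Matrix (Fin k₂) (Fin k₁) ℂ) (h : B * ξ * Bᴴ = 0) : B = 0 := by
  ext a b
  have hx : star (star (B a)) ⬝ᵥ (ξ *ᵥ star (B a)) = (B * ξ * Bᴴ) a a := by
    simp only [star_star, mul_apply, mulVec, dotProduct, conjTranspose_apply,
      Finset.mul_sum, Finset.sum_mul, Pi.star_apply]
    rw [Finset.sum_comm]
    refine Finset.sum_congr rfl fun c _ => Finset.sum_congr rfl fun c' _ => by ring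
  have hz : star (B a) = 0 := by
    by_contra hne
    have := hξ.dotProduct_mulVec_pos hne
    rw [hx, h] at this
    simp at this
  have := congrFun hz b
  simpa using this

/-- conjTranspose of a Kronecker product. -/
lemma aux_kron_conjT {m n p q : Type*} (A : Matrix m n ℂ) (B : Matrix p q ℂ) :
    (A ⊗ₖ B)ᴴ = Aᴴ ⊗ₖ Bᴴ := by
  ext ⟨i, j⟩ ⟨k, l⟩
  simp [conjTranspose_apply, mul_comm]

theorem block_structure_lemma (d k₁ k₂ : ℕ) (hd : 1 ≤ d) (hk₁ : 1 ≤ k₁) (hk₂ : 1 ≤ k₂)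
    (e f : Fin d → Fin d → ℂ)
    (he : ∀ i j, star (e i) ⬝ᵥ e j = if i = j then 1 else 0)
    (hf : ∀ i j, star (f i) ⬝ᵥ f j = if i = j then 1 else 0)
    (ξ : Matrix (Fin k₁) (Fin k₁) ℂ) (hξ : ξ.PosDef) (hξtr : ξ.trace = 1)
    (τ : Fin d → Matrix (Fin k₂) (Fin k₂) ℂ)
    (hτ : ∀ j, (τ j).PosSemidef ∧ (τ j).trace = 1)
    (V : Matrix (Fin d × Fin k₂) (Fin d × Fin k₁) ℂ)
    (hV : V * Vᴴ = 1 ∧ Vᴴ * V = 1)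
    (hint : ∀ j, V * ((vecMulVec (e j) (star (e j))) ⊗ₖ ξ) * Vᴴ
        = (vecMulVec (f j) (star (f j))) ⊗ₖ τ j) :
    ∃ W : Fin d → Matrix (Fin k₂) (Fin k₁) ℂ,
      (∀ j, W j * (W j)ᴴ = 1 ∧ (W j)ᴴ * W j = 1) ∧
      V = ∑ j, (vecMulVec (f j) (star (e j))) ⊗ₖ W j ∧
      ∀ j, τ j = W j * ξ * (W j)ᴴ := by
  classical
  obtain ⟨hV1, hV2⟩ := hV
  set Ue : Matrix (Fin d) (Fin d) ℂ := Matrix.of (fun i j => e j i) with hUe_def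
  set Uf : Matrix (Fin d) (Fin d) ℂ := Matrix.of (fun i j => f j i) with hUf_def
  have hUe1 : Ueᴴ * Ue = 1 := by
    ext i j
    simpa [hUe_def, Matrix.mul_apply, dotProduct, Matrix.one_apply,
      Matrix.conjTranspose_apply] using he i j
  have hUf1 : Ufᴴ * Uf = 1 := by
    ext i j
    simpa [hUf_def, Matrix.mul_apply, dotProduct, Matrix.one_apply,
      Matrix.conjTranspose_apply] using hf i j
  have hUe2 : Ue * Ueᴴ = 1 := mul_eq_one_comm.mp hUe1
  have hUf2 : Uf * Ufᴴ = 1 := mul_eq_one_comm.mp hUf1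
  -- key identities
  have keyE : ∀ j, Ue * Matrix.single j j (1 : ℂ) * Ueᴴ = vecMulVec (e j) (star (e j)) := by
    intro j; ext a b
    simp [hUe_def, Matrix.mul_apply, Matrix.single, vecMulVec_apply,
      Matrix.conjTranspose_apply, ite_mul, mul_ite, ite_and, Finset.sum_ite_eq,
      Finset.sum_ite_eq']
  have keyF : ∀ j, Uf * Matrix.single j j (1 : ℂ) * Ufᴴ = vecMulVec (f j) (star (f j)) := by
    intro j; ext a b
    simp [hUf_def, Matrix.mul_apply, Matrix.single, vecMulVec_apply,
      Matrix.conjTranspose_apply, ite_mul, mul_ite, ite_and, Finset.sum_ite_eq,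
      Finset.sum_ite_eq']
  have keyEF : ∀ j, Uf * Matrix.single j j (1 : ℂ) * Ueᴴ = vecMulVec (f j) (star (e j)) := by
    intro j; ext a b
    simp [hUe_def, hUf_def, Matrix.mul_apply, Matrix.single, vecMulVec_apply,
      Matrix.conjTranspose_apply, ite_mul, mul_ite, ite_and, Finset.sum_ite_eq,
      Finset.sum_ite_eq']
  set Pe : Matrix (Fin d × Fin k₁) (Fin d × Fin k₁) ℂ :=
    Ue ⊗ₖ (1 : Matrix (Fin k₁) (Fin k₁) ℂ) with hPe_def
  set Pe' : Matrix (Fin d × Fin k₁) (Fin d × Fin k₁) ℂ :=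
    Ueᴴ ⊗ₖ (1 : Matrix (Fin k₁) (Fin k₁) ℂ) with hPe'_def
  set Pf : Matrix (Fin d × Fin k₂) (Fin d × Fin k₂) ℂ :=
    Uf ⊗ₖ (1 : Matrix (Fin k₂) (Fin k₂) ℂ) with hPf_def
  set Pf' : Matrix (Fin d × Fin k₂) (Fin d × Fin k₂) ℂ :=
    Ufᴴ ⊗ₖ (1 : Matrix (Fin k₂) (Fin k₂) ℂ) with hPf'_def
  set V' : Matrix (Fin d × Fin k₂) (Fin d × Fin k₁) ℂ := Pf' * V * Pe with hV'_def
  have hkUe : Pe * Pe' = 1 := by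
    rw [hPe_def, hPe'_def, ← Matrix.mul_kronecker_mul, hUe2, Matrix.mul_one,
      Matrix.one_kronecker_one]
  have hkUe' : Pe' * Pe = 1 := by
    rw [hPe_def, hPe'_def, ← Matrix.mul_kronecker_mul, hUe1, Matrix.mul_one,
      Matrix.one_kronecker_one]
  have hkUf : Pf * Pf' = 1 := by
    rw [hPf_def, hPf'_def, ← Matrix.mul_kronecker_mul, hUf2, Matrix.mul_one,
      Matrix.one_kronecker_one]
  have hkUf' : Pf' * Pf = 1 := by
    rw [hPf_def, hPf'_def, ← Matrix.mul_kronecker_mul, hUf1, Matrix.mul_one,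
      Matrix.one_kronecker_one]
  have hV'ct : V'ᴴ = Pe' * Vᴴ * Pf := by
    rw [hV'_def, hPe_def, hPe'_def, hPf_def, hPf'_def]
    simp only [Matrix.conjTranspose_mul, aux_kron_conjT, Matrix.conjTranspose_one,
      Matrix.conjTranspose_conjTranspose, Matrix.mul_assoc]
  have hV'1 : V' * V'ᴴ = 1 := by
    rw [hV'_def, hV'ct]
    calc Pf' * V * Pe * (Pe' * Vᴴ * Pf)
        = Pf' * (V * (Pe * Pe') * Vᴴ) * Pf := by simp only [Matrix.mul_assoc]
      _ = 1 := by rw [hkUe, Matrix.mul_one, hV1, Matrix.mul_one, hkUf']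
  have hV'2 : V'ᴴ * V' = 1 := by
    rw [hV'_def, hV'ct]
    calc Pe' * Vᴴ * Pf * (Pf' * V * Pe)
        = Pe' * (Vᴴ * (Pf * Pf') * V) * Pe := by simp only [Matrix.mul_assoc]
      _ = 1 := by rw [hkUf, Matrix.mul_one, hV2, Matrix.mul_one, hkUe']
  -- transformed intertwining relation
  have hint' : ∀ j, V' * (Matrix.single j j (1 : ℂ) ⊗ₖ ξ) * V'ᴴ
      = Matrix.single j j (1 : ℂ) ⊗ₖ τ j := by
    intro j
    have step1 : Pe * (Matrix.single j j (1 : ℂ) ⊗ₖ ξ) * Pe'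
        = vecMulVec (e j) (star (e j)) ⊗ₖ ξ := by
      rw [hPe_def, hPe'_def, ← Matrix.mul_kronecker_mul, ← Matrix.mul_kronecker_mul,
        Matrix.one_mul, Matrix.mul_one, keyE]
    have step2 : Pf' * (vecMulVec (f j) (star (f j)) ⊗ₖ τ j) * Pf
        = Matrix.single j j (1 : ℂ) ⊗ₖ τ j := by
      rw [← keyF j, hPf_def, hPf'_def, ← Matrix.mul_kronecker_mul, ← Matrix.mul_kronecker_mul,
        Matrix.one_mul, Matrix.mul_one]
      have hmid : Ufᴴ * (Uf * Matrix.single j j 1 * Ufᴴ) * Uf = Matrix.single j j 1 := by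
        calc Ufᴴ * (Uf * Matrix.single j j 1 * Ufᴴ) * Uf
            = (Ufᴴ * Uf) * (Matrix.single j j 1 * (Ufᴴ * Uf)) := by
              simp only [Matrix.mul_assoc]
          _ = Matrix.single j j 1 := by rw [hUf1, Matrix.mul_one, Matrix.one_mul]
      rw [hmid]
    rw [hV'_def, hV'ct]
    calc Pf' * V * Pe * (Matrix.single j j (1 : ℂ) ⊗ₖ ξ) * (Pe' * Vᴴ * Pf)
        = Pf' * (V * (Pe * (Matrix.single j j (1 : ℂ) ⊗ₖ ξ) * Pe') * Vᴴ) * Pf := by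
          simp only [Matrix.mul_assoc]
      _ = Matrix.single j j (1 : ℂ) ⊗ₖ τ j := by
          rw [step1, hint j]
          exact step2
  -- blocks of V'
  set Bk : Fin d → Fin d → Matrix (Fin k₂) (Fin k₁) ℂ :=
    fun i j => Matrix.of (fun a b => V' (i, a) (j, b)) with hBk_def
  have hblock : ∀ i i' j, Bk i j * ξ * (Bk i' j)ᴴ
      = if i = j ∧ i' = j then τ j else 0 := by
    intro i i' j
    ext a b
    have h := congrFun (congrFun (hint' j) (i, a)) (i', b)
    have lhs_eq : (V' * (Matrix.single j j (1 : ℂ) ⊗ₖ ξ) * V'ᴴ) (i, a) (i', b)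
        = (Bk i j * ξ * (Bk i' j)ᴴ) a b := by
      simp only [Matrix.mul_apply, Matrix.conjTranspose_apply, kroneckerMap_apply,
        Fintype.sum_prod_type, Matrix.single, Matrix.of_apply, hBk_def,
        ite_mul, mul_ite, zero_mul, mul_zero, one_mul, ite_and, Finset.sum_ite_eq,
        Finset.sum_ite_eq', Finset.mem_univ, if_true, Finset.sum_ite_irrel,
        Finset.sum_const_zero]
    rw [lhs_eq] at h
    rw [h]
    by_cases hc : i = j ∧ i' = j
    · simp [hc, kroneckerMap_apply, Matrix.single, Matrix.of_apply]
    · simp only [kroneckerMap_apply, Matrix.single, Matrix.of_apply, if_neg hc,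
        Matrix.zero_apply, ite_mul, one_mul, zero_mul]
      rw [if_neg]
      rintro ⟨rfl, rfl⟩
      exact hc ⟨rfl, rfl⟩
  have hBzero : ∀ i j, i ≠ j → Bk i j = 0 := by
    intro i j hij
    refine aux_zero_of_posdef ξ hξ _ ?_
    rw [hblock i i j, if_neg (by tauto)]
  set W : Fin d → Matrix (Fin k₂) (Fin k₁) ℂ := fun j => Bk j j with hW_def
  have hτW : ∀ j, τ j = W j * ξ * (W j)ᴴ := by
    intro j
    rw [hW_def]
    rw [hblock j j j, if_pos ⟨rfl, rfl⟩]
  have hWu2 : ∀ j, (W j)ᴴ * W j = 1 := by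
    intro j
    ext b b'
    have h := congrFun (congrFun hV'2 (j, b)) (j, b')
    have lhs_eq : (V'ᴴ * V') (j, b) (j, b')
        = ∑ i, ((Bk i j)ᴴ * Bk i j) b b' := by
      simp only [Matrix.mul_apply, Matrix.conjTranspose_apply, Fintype.sum_prod_type,
        hBk_def, Matrix.of_apply]
    rw [lhs_eq] at h
    have hsum : ∑ i, ((Bk i j)ᴴ * Bk i j) b b' = ((W j)ᴴ * W j) b b' :=
      Finset.sum_eq_single j
        (fun i _ hij => by rw [hBzero i j hij]; simp) (by simp)
    rw [hsum] at h
    rw [h]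
    simp [Matrix.one_apply, Prod.ext_iff]
  have hWu1 : ∀ j, W j * (W j)ᴴ = 1 := by
    intro j
    ext a a'
    have h := congrFun (congrFun hV'1 (j, a)) (j, a')
    have lhs_eq : (V' * V'ᴴ) (j, a) (j, a')
        = ∑ m, (Bk j m * (Bk j m)ᴴ) a a' := by
      simp only [Matrix.mul_apply, Matrix.conjTranspose_apply, Fintype.sum_prod_type,
        hBk_def, Matrix.of_apply]
    rw [lhs_eq] at h
    have hsum : ∑ m, (Bk j m * (Bk j m)ᴴ) a a' = (W j * (W j)ᴴ) a a' :=
      Finset.sum_eq_single j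
        (fun m _ hmj => by rw [hBzero j m (Ne.symm hmj)]; simp) (by simp)
    rw [hsum] at h
    rw [h]
    simp [Matrix.one_apply, Prod.ext_iff]
  -- V' is block diagonal
  have hV'diag : V' = ∑ j, Matrix.single j j (1 : ℂ) ⊗ₖ W j := by
    ext ⟨i, a⟩ ⟨j, b⟩
    rw [Matrix.sum_apply]
    have hterm : ∀ m : Fin d, (Matrix.single m m (1 : ℂ) ⊗ₖ W m) (i, a) (j, b)
        = if m = i ∧ m = j then W m a b else 0 := by
      intro m
      simp [Matrix.single, ite_mul, and_comm, eq_comm]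
    rw [Finset.sum_congr rfl fun m _ => hterm m]
    by_cases hij : i = j
    · subst hij
      rw [Finset.sum_eq_single i
        (fun m _ hmi => if_neg fun h => hmi h.1) (by simp)]
      simp [hW_def, hBk_def]
    · have h0 : V' (i, a) (j, b) = 0 := by
        simpa [hBk_def] using congrFun (congrFun (hBzero i j hij) a) b
      rw [h0]
      symm
      refine Finset.sum_eq_zero fun m _ => ?_
      rw [if_neg]
      rintro ⟨rfl, rfl⟩
      exact hij rfl
  have hVrec : V = Pf * V' * Pe' := by
    calc V = (Pf * Pf') * V * (Pe * Pe') := by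
          rw [hkUe, hkUf, Matrix.one_mul, Matrix.mul_one]
      _ = Pf * (Pf' * V * Pe) * Pe' := by simp only [Matrix.mul_assoc]
      _ = Pf * V' * Pe' := by rw [← hV'_def]
  refine ⟨W, fun j => ⟨hWu1 j, hWu2 j⟩, ?_, hτW⟩
  rw [hVrec, hV'diag, Matrix.mul_sum, Matrix.sum_mul]
  refine Finset.sum_congr rfl fun j _ => ?_
  rw [hPf_def, hPe'_def, ← Matrix.mul_kronecker_mul, ← Matrix.mul_kronecker_mul,
    Matrix.one_mul, Matrix.mul_one, keyEF]

end
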